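/- There exists ε₀ > 0 such that for every ε with 0 < ε < ε₀ the following holds. Let A, B, C be the vertices of an equilateral triangle of side 1 in the Euclidean plane, and let A', B', C' be points such that all three mutual distances dist A' B', dist B' C', dist A' C' lie in the interval [1, 1 + ε], dist A A' ≤ ε, dist B B' ≤ ε, and C and C' lie in the same open half-plane determined by the line through A and B. Then dist C C' ≤ 10·ε. -/
import Mathlib


/-- The 2×2 determinant of two vectors of the Euclidean plane. -/
noncomputable def det2 (u v : EuclideanSpace ℝ (Fin 2)) : ℝ :=
  u 0 * v 1 - u 1 * v 0

set_option maxHeartbeats 1000000 in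
lemma real_key (ε xq yq yp : ℝ) (hε : 0 < ε) (he : ε < 1/100)
    (hyp : yp^2 = 3/4)
    (ha1 : (1-ε)^2 ≤ xq^2 + yq^2) (ha2 : xq^2+yq^2 ≤ (1+2*ε)^2)
    (hb1 : (1-ε)^2 ≤ (xq-1)^2 + yq^2) (hb2 : (xq-1)^2 + yq^2 ≤ (1+2*ε)^2)
    (hside : 0 < yp * yq) :
    (1/2 - xq)^2 + (yp - yq)^2 ≤ (10*ε)^2 := by
  have hee : ε^2 ≤ ε/100 := by nlinarith
  have hxq1 : xq ≤ 1/2 + 3.015*ε := by nlinarith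
  have hxq2 : 1/2 - 3.015*ε ≤ xq := by nlinarith
  have hA : (1/2 - xq)^2 ≤ (3.015*ε)^2 := by nlinarith
  have hxsq1 : xq^2 - 1/4 ≤ 3.2*ε := by nlinarith [hA]
  have hxsq2 : -(3.2*ε) ≤ xq^2 - 1/4 := by nlinarith [hA]
  have hy1 : yq^2 - 3/4 ≤ 7.3*ε := by nlinarith
  have hy2 : -(7.3*ε) ≤ yq^2 - 3/4 := by nlinarith
  have hyql : (0.67:ℝ) ≤ yq^2 := by nlinarith
  have hB : (3/4 - yq^2)^2 ≤ (7.3*ε)^2 := by nlinarith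
  have hC : (1.42:ℝ) ≤ (yp + yq)^2 := by nlinarith
  have hD : (yp - yq)^2 * (yp + yq)^2 = (3/4 - yq^2)^2 := by
    linear_combination (yp^2 + 3/4 - 2*yq^2) * hyp
  have hE : (yp - yq)^2 ≤ 38 * ε^2 := by
    nlinarith [mul_le_mul_of_nonneg_left hC (sq_nonneg (yp - yq))]
  nlinarith [hA, hE, sq_nonneg ε]

set_option maxHeartbeats 1000000 in
lemma coord_key (ε u0 u1 p0 p1 q0 q1 dA dB dCC : ℝ)
    (hε : 0 < ε) (he : ε < 1/100)
    (hu : u0^2 + u1^2 = 1) (hp : p0^2 + p1^2 = 1)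
    (hpb : (p0-u0)^2 + (p1-u1)^2 = 1)
    (hqA : q0^2 + q1^2 = dA^2) (hqB : (q0-u0)^2 + (q1-u1)^2 = dB^2)
    (hCC : dCC^2 = (p0-q0)^2 + (p1-q1)^2) (hCC0 : 0 ≤ dCC)
    (h1 : 1 - ε ≤ dA) (h2 : dA ≤ 1 + 2*ε) (hdA : 0 ≤ dA)
    (h3 : 1 - ε ≤ dB) (h4 : dB ≤ 1 + 2*ε) (hdB : 0 ≤ dB)
    (hside : 0 < (u0*p1 - u1*p0) * (u0*q1 - u1*q0)) :
    dCC ≤ 10 * ε := by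
  have hLp : (u0*p0+u1*p1)^2 + (u0*p1-u1*p0)^2 = 1 := by
    linear_combination (p0^2+p1^2)*hu + hp
  have hLpb : (u0*p0+u1*p1 - 1)^2 + (u0*p1-u1*p0)^2 = 1 := by
    linear_combination (2*(u0*p0+u1*p1) - 1 - (u0^2+u1^2))*hu + (u0^2+u1^2)*hpb + hu
  have hxp : u0*p0+u1*p1 = 1/2 := by linear_combination (hLp - hLpb)/2
  have hyp2 : (u0*p1-u1*p0)^2 = 3/4 := by
    linear_combination hLp - (u0*p0+u1*p1 + 1/2)*hxp
  have hLq : (u0*q0+u1*q1)^2 + (u0*q1-u1*q0)^2 = dA^2 := by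
    linear_combination (q0^2+q1^2)*hu + hqA
  have hLqb : (u0*q0+u1*q1 - 1)^2 + (u0*q1-u1*q0)^2 = dB^2 := by
    linear_combination (2*(u0*q0+u1*q1) - 1 - (u0^2+u1^2))*hu + (u0^2+u1^2)*hqB + dB^2*hu
  have hCC2 : dCC^2 = ((u0*p0+u1*p1)-(u0*q0+u1*q1))^2
      + ((u0*p1-u1*p0)-(u0*q1-u1*q0))^2 := by
    linear_combination hCC - ((p0-q0)^2+(p1-q1)^2)*hu
  have h1' : (1-ε)^2 ≤ (u0*q0+u1*q1)^2 + (u0*q1-u1*q0)^2 := by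
    rw [hLq]; exact pow_le_pow_left₀ (by linarith) h1 2
  have h2' : (u0*q0+u1*q1)^2 + (u0*q1-u1*q0)^2 ≤ (1+2*ε)^2 := by
    rw [hLq]; exact pow_le_pow_left₀ hdA h2 2
  have h3' : (1-ε)^2 ≤ ((u0*q0+u1*q1)-1)^2 + (u0*q1-u1*q0)^2 := by
    rw [hLqb]; exact pow_le_pow_left₀ (by linarith) h3 2
  have h4' : ((u0*q0+u1*q1)-1)^2 + (u0*q1-u1*q0)^2 ≤ (1+2*ε)^2 := by
    rw [hLqb]; exact pow_le_pow_left₀ hdB h4 2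
  have hmain := real_key ε (u0*q0+u1*q1) (u0*q1-u1*q0) (u0*p1-u1*p0)
    hε he hyp2 h1' h2' h3' h4' hside
  rw [hxp] at hCC2
  have hsq : dCC^2 ≤ (10*ε)^2 := by rw [hCC2]; linarith [hmain]
  have h10 : (0:ℝ) ≤ 10*ε := by linarith
  exact (pow_le_pow_iff_left₀ hCC0 h10 (by norm_num)).mp hsq

lemma dist_sq' (X Y : EuclideanSpace ℝ (Fin 2)) :
    dist X Y ^ 2 = (X 0 - Y 0)^2 + (X 1 - Y 1)^2 := by
  rw [EuclideanSpace.dist_eq, Real.sq_sqrt (by positivity)]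
  simp [Fin.sum_univ_two, Real.dist_eq, sq_abs]

lemma key (ε : ℝ) (hε : 0 < ε) (he : ε < 1/100)
    (A B C C' : EuclideanSpace ℝ (Fin 2))
    (hAB : dist A B = 1) (hBC : dist B C = 1) (hAC : dist A C = 1)
    (h1 : 1 - ε ≤ dist A C') (h2 : dist A C' ≤ 1 + 2*ε)
    (h3 : 1 - ε ≤ dist B C') (h4 : dist B C' ≤ 1 + 2*ε)
    (hside : 0 < det2 (B - A) (C - A) * det2 (B - A) (C' - A)) :
    dist C C' ≤ 10 * ε := by
  have hu : (B 0 - A 0)^2 + (B 1 - A 1)^2 = 1 := by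
    have h := dist_sq' B A; rw [dist_comm, hAB] at h; rw [← h]; norm_num
  have hp : (C 0 - A 0)^2 + (C 1 - A 1)^2 = 1 := by
    have h := dist_sq' C A; rw [dist_comm, hAC] at h; rw [← h]; norm_num
  have hpb : ((C 0 - A 0) - (B 0 - A 0))^2 + ((C 1 - A 1) - (B 1 - A 1))^2 = 1 := by
    have h := dist_sq' C B; rw [dist_comm, hBC] at h
    rw [show (C 0 - A 0) - (B 0 - A 0) = C 0 - B 0 by ring,
        show (C 1 - A 1) - (B 1 - A 1) = C 1 - B 1 by ring, ← h]; norm_num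
  have hqA : (C' 0 - A 0)^2 + (C' 1 - A 1)^2 = dist A C' ^ 2 := by
    have h := dist_sq' C' A; rw [dist_comm] at h; exact h.symm ▸ rfl
  have hqB : ((C' 0 - A 0) - (B 0 - A 0))^2 + ((C' 1 - A 1) - (B 1 - A 1))^2
      = dist B C' ^ 2 := by
    have h := dist_sq' C' B; rw [dist_comm] at h
    rw [show (C' 0 - A 0) - (B 0 - A 0) = C' 0 - B 0 by ring,
        show (C' 1 - A 1) - (B 1 - A 1) = C' 1 - B 1 by ring]
    exact h.symm
  have hCC : dist C C' ^ 2 = ((C 0 - A 0) - (C' 0 - A 0))^2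
      + ((C 1 - A 1) - (C' 1 - A 1))^2 := by
    have h := dist_sq' C C'
    rw [show (C 0 - A 0) - (C' 0 - A 0) = C 0 - C' 0 by ring,
        show (C 1 - A 1) - (C' 1 - A 1) = C 1 - C' 1 by ring]
    exact h
  have hside' : 0 < ((B 0 - A 0)*(C 1 - A 1) - (B 1 - A 1)*(C 0 - A 0))
      * ((B 0 - A 0)*(C' 1 - A 1) - (B 1 - A 1)*(C' 0 - A 0)) := by
    have e : ∀ X : EuclideanSpace ℝ (Fin 2), det2 (B - A) (X - A)
        = (B 0 - A 0)*(X 1 - A 1) - (B 1 - A 1)*(X 0 - A 0) := by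
      intro X; simp [det2]
    rw [e C, e C'] at hside; exact hside
  exact coord_key ε (B 0 - A 0) (B 1 - A 1) (C 0 - A 0) (C 1 - A 1)
    (C' 0 - A 0) (C' 1 - A 1) (dist A C') (dist B C') (dist C C')
    hε he hu hp hpb hqA hqB hCC dist_nonneg h1 h2 dist_nonneg h3 h4 dist_nonneg hside'

/-- There is `ε₀ > 0` such that for every `0 < ε < ε₀`: if `A B C` is an equilateral triangle
of side `1`, and `A' B' C'` has all mutual distances in `[1, 1 + ε]`, with `dist A A' ≤ ε`,
`dist B B' ≤ ε`, and `C`, `C'` on the same open side of the line through `A` and `B`, then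
`dist C C' ≤ 10·ε`. -/
theorem dist_perturbed_apex_le :
    ∃ ε₀ > (0 : ℝ), ∀ ε : ℝ, 0 < ε → ε < ε₀ →
      ∀ A B C A' B' C' : EuclideanSpace ℝ (Fin 2),
        dist A B = 1 → dist B C = 1 → dist A C = 1 →
        dist A' B' ∈ Set.Icc 1 (1 + ε) →
        dist B' C' ∈ Set.Icc 1 (1 + ε) →
        dist A' C' ∈ Set.Icc 1 (1 + ε) →
        dist A A' ≤ ε → dist B B' ≤ ε →
        0 < det2 (B - A) (C - A) * det2 (B - A) (C' - A) →
        dist C C' ≤ 10 * ε := by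
  refine ⟨1/100, by norm_num, ?_⟩
  intro ε hε he A B C A' B' C' hAB hBC hAC _ hBC' hAC' hAA' hBB' hside
  have t1 : dist A C' ≤ dist A A' + dist A' C' := dist_triangle A A' C'
  have t2 : dist A' C' ≤ dist A' A + dist A C' := dist_triangle A' A C'
  have t3 : dist B C' ≤ dist B B' + dist B' C' := dist_triangle B B' C'
  have t4 : dist B' C' ≤ dist B' B + dist B C' := dist_triangle B' B C'
  rw [dist_comm A' A] at t2
  rw [dist_comm B' B] at t4
  exact key ε hε he A B C C' hAB hBC hAC
    (by have := hAC'.1; linarith) (by have := hAC'.2; linarith)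
    (by have := hBC'.1; linarith) (by have := hBC'.2; linarith) hside
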